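/- Let F be a field and let m, n, u, v, q, h, gzu, gyv, gzv ∈ F satisfy m ≠ 0, n ≠ 0, n·q + v ≠ 0, and v·m + u·n = 1. Define g = n/m, k = (m·q − u)/(n·q + v), S = (1 − k·g)⁻¹ (which is well defined since 1 − k·g = (m·(n·q + v))⁻¹ ≠ 0), and set A = m²·gzu·gyv, B = m²·n⁻¹·v·gzu·gyv, E = m·n·h, F₀ = (m·v − 1)·h, and L = gzv − m·n⁻¹·gzu·gyv. Then: (i) gzv + k·gzu·gyv·S = L + A·q + B; (ii) k·h·g·S = E·q + F₀; and (iii) k·h·gzu·gyv·S² = (A·q + B)·(E·q + F₀). -/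

import Mathlib

/-- Closed-loop quantities rewritten as affine/quadratic expressions in the
Youla parameter `q`. -/
theorem stmt_1 {𝕜 : Type*} [Field 𝕜] (m n u v q h gzu gyv gzv : 𝕜)
    (g k S A B E F₀ L : 𝕜)
    (hm : m ≠ 0) (hn : n ≠ 0) (hnv : n * q + v ≠ 0) (hbez : v * m + u * n = 1)
    (hg : g = n / m) (hk : k = (m * q - u) / (n * q + v))
    (hS : S = (1 - k * g)⁻¹)
    (hA : A = m ^ 2 * gzu * gyv)
    (hB : B = m ^ 2 * n⁻¹ * v * gzu * gyv)
    (hE : E = m * n * h)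
    (hF : F₀ = (m * v - 1) * h)
    (hL : L = gzv - m * n⁻¹ * gzu * gyv) :
    gzv + k * gzu * gyv * S = L + A * q + B ∧
    k * h * g * S = E * q + F₀ ∧
    k * h * gzu * gyv * S ^ 2 = (A * q + B) * (E * q + F₀) := by
  have hnv2 : q * n + v ≠ 0 := by rwa [mul_comm q n]
  have hkg : 1 - k * g = (m * (n * q + v))⁻¹ := by
    rw [hk, hg]
    field_simp
    linear_combination hbez
  have hS' : S = m * (n * q + v) := by
    rw [hS, hkg, inv_inv]
  subst hS' hk hg hA hB hE hF hL
  refine ⟨?_, ?_, ?_⟩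
  · field_simp
    linear_combination (-(m * gzu * gyv)) * hbez
  · field_simp
    linear_combination (-h) * hbez
  · field_simp
    linear_combination (-(h * gzu * gyv)) * hbez
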